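/- Define the p-quadratic variation [f]_{n,p} = ( Σ_{i=1}^n |ξ(i)^2|_p )^{1/2} for a martingale difference sequence ξ(i). Then |S(n)|_p ≤ (p-1)·[f]_{n,p} for p ≥ 2, where S(n) = Σ ξ(i) and |η|_p = (E|η|^p)^{1/p}. -/

import Mathlib

open MeasureTheory Finset
open Metric
open scoped ENNReal NNReal

namespace RioAux

lemma sq_rpow_half (q z : ℝ) : (z ^ 2) ^ (q / 2) = |z| ^ q := by
  rw [← sq_abs z, ← Real.rpow_natCast |z| 2, ← Real.rpow_mul (abs_nonneg z)]
  congr 1; ring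

lemma abs_rpow_hasDeriv {p : ℝ} (hp : 2 ≤ p) (z : ℝ) :
    HasDerivAt (fun z : ℝ => |z| ^ p) (p * |z| ^ (p - 2) * z) z := by
  have h1 : HasDerivAt (fun w : ℝ => w ^ 2) (2 * z) z := by
    simpa using hasDerivAt_pow 2 z
  have h3 : HasDerivAt (fun w : ℝ => (w ^ 2) ^ (p / 2))
      ((2 * z) * (p / 2) * (z ^ 2) ^ (p / 2 - 1)) z :=
    h1.rpow_const (Or.inr (by linarith))
  have hfun : (fun w : ℝ => (w ^ 2) ^ (p / 2)) = fun w : ℝ => |w| ^ p := by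
    funext w
    simpa using sq_rpow_half p w
  have hval : (2 * z) * (p / 2) * (z ^ 2) ^ (p / 2 - 1) = p * |z| ^ (p - 2) * z := by
    have he : (z ^ 2) ^ (p / 2 - 1) = |z| ^ (p - 2) := by
      have h4 : p / 2 - 1 = (p - 2) / 2 := by ring
      rw [h4, sq_rpow_half]
    rw [he]; ring
  rw [hfun, hval] at h3
  exact h3

lemma psi_hasDeriv {p : ℝ} (hp : 2 ≤ p) (z : ℝ) :
    HasDerivAt (fun z : ℝ => |z| ^ (p - 2) * z) ((p - 1) * |z| ^ (p - 2)) z := by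
  rcases eq_or_lt_of_le hp with hp2 | hp2
  · subst hp2
    have hfun : (fun z : ℝ => |z| ^ (2 - 2 : ℝ) * z) = fun z : ℝ => z := by
      funext w; norm_num
    rw [hfun]
    norm_num
    exact hasDerivAt_id z
  · rcases eq_or_ne z 0 with rfl | hz
    · have h0 : |(0:ℝ)| ^ (p - 2) = 0 := by
        rw [abs_zero, Real.zero_rpow (by linarith)]
      rw [h0, mul_zero]
      rw [hasDerivAt_iff_tendsto_slope]
      have hs : ∀ w : ℝ, w ≠ 0 → slope (fun z : ℝ => |z| ^ (p - 2) * z) 0 w = |w| ^ (p - 2) := by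
        intro w hw
        rw [slope_def_field]
        field_simp
        simp
      have hc0 : ContinuousAt (fun x : ℝ => x ^ (p - 2)) |(0:ℝ)| :=
        Real.continuousAt_rpow_const _ _ (Or.inr (by linarith))
      have hc : ContinuousAt (fun w : ℝ => |w| ^ (p - 2)) 0 := hc0.comp continuous_abs.continuousAt
      have htend : Filter.Tendsto (fun w : ℝ => |w| ^ (p - 2)) (nhdsWithin 0 {0}ᶜ) (nhds 0) := by
        have := hc.tendsto
        rw [h0] at this
        exact this.mono_left nhdsWithin_le_nhds
      exact htend.congr' (by
        filter_upwards [self_mem_nhdsWithin] with w hw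
        exact (hs w hw).symm)
    · have hz2 : z ^ 2 ≠ 0 := pow_ne_zero _ hz
      have h1 : HasDerivAt (fun w : ℝ => w ^ 2) (2 * z) z := by simpa using hasDerivAt_pow 2 z
      have h3 : HasDerivAt (fun w : ℝ => (w ^ 2) ^ ((p - 2) / 2))
          ((2 * z) * ((p - 2) / 2) * (z ^ 2) ^ ((p - 2) / 2 - 1)) z :=
        h1.rpow_const (Or.inl hz2)
      have h4 := h3.mul (hasDerivAt_id z)
      simp only [id_eq] at h4
      have h4 : HasDerivAt (fun w : ℝ => (w ^ 2) ^ ((p - 2) / 2) * w) _ z := h4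
      have hfun : (fun w : ℝ => (w ^ 2) ^ ((p - 2) / 2) * w)
          = fun w : ℝ => |w| ^ (p - 2) * w := by
        funext w
        rw [sq_rpow_half]
      rw [hfun] at h4
      have hzpos : (0:ℝ) < z ^ 2 := by positivity
      have hval : (2 * z) * ((p - 2) / 2) * (z ^ 2) ^ ((p - 2) / 2 - 1) * z
          + ((z ^ 2) ^ ((p - 2) / 2)) * 1 = (p - 1) * |z| ^ (p - 2) := by
        have he : (z ^ 2) ^ ((p - 2) / 2 - 1) * z ^ 2 = (z ^ 2) ^ ((p - 2) / 2) := by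
          rw [← Real.rpow_add_one hz2]
          congr 1; ring
        have he2 : (z ^ 2) ^ ((p - 2) / 2) = |z| ^ (p - 2) := sq_rpow_half _ _
        calc (2 * z) * ((p - 2) / 2) * (z ^ 2) ^ ((p - 2) / 2 - 1) * z
              + ((z ^ 2) ^ ((p - 2) / 2)) * 1
            = (p - 2) * ((z ^ 2) ^ ((p - 2) / 2 - 1) * z ^ 2) + (z ^ 2) ^ ((p - 2) / 2) := by ring
          _ = (p - 1) * |z| ^ (p - 2) := by rw [he, he2]; ring
      rw [hval] at h4
      exact h4




lemma abs_rpow_mul_abs {p : ℝ} (hp : 2 ≤ p) (z : ℝ) :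
    |z| ^ (p - 2) * |z| = |z| ^ (p - 1) := by
  rcases eq_or_ne z 0 with rfl | hz
  · simp [Real.zero_rpow (show p - 1 ≠ 0 by linarith)]
  · rw [← Real.rpow_add_one (abs_ne_zero.2 hz) (p - 2)]
    congr 1; ring

lemma abs_rpow_mul_sq {p : ℝ} (hp : 2 ≤ p) (z : ℝ) :
    |z| ^ (p - 2) * z ^ 2 = |z| ^ p := by
  rcases eq_or_ne z 0 with rfl | hz
  · simp [Real.zero_rpow (show p ≠ 0 by linarith)]
  · rw [← sq_abs z, ← Real.rpow_natCast |z| 2, ← Real.rpow_add (abs_pos.2 hz)]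
    congr 1; push_cast; ring

lemma abs_psi {p : ℝ} (hp : 2 ≤ p) (z : ℝ) :
    |(|z| ^ (p - 2) * z)| = |z| ^ (p - 1) := by
  rw [abs_mul, abs_of_nonneg (Real.rpow_nonneg (abs_nonneg z) _)]
  exact abs_rpow_mul_abs hp z

variable {Ω : Type*} [MeasurableSpace Ω] {μ : Measure Ω}

lemma memLp_abs_rpow {p : ℝ} {r : ℝ} (hr : 0 ≤ r) {f : Ω → ℝ}
    (hf : MemLp f (ENNReal.ofReal p) μ) :
    MemLp (fun ω => |f ω| ^ r) (ENNReal.ofReal p / ENNReal.ofReal r) μ := by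
  have h := hf.norm_rpow_div (ENNReal.ofReal r)
  simpa [Real.norm_eq_abs, ENNReal.toReal_ofReal hr] using h

lemma integrable_abs_rpow_mul {p : ℝ} (hp : 0 < p) {f g : Ω → ℝ}
    (hf : MemLp f (ENNReal.ofReal p) μ) (hg : MemLp g (ENNReal.ofReal p) μ)
    {r s : ℝ} (hr : 0 ≤ r) (hs : 0 ≤ s) (hrs : r + s = p) :
    Integrable (fun ω => |f ω| ^ r * |g ω| ^ s) μ := by
  rw [← memLp_one_iff_integrable]
  have h1 := memLp_abs_rpow hr hf
  have h2 := memLp_abs_rpow hs hg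
  have hP0 : ENNReal.ofReal p ≠ 0 := by
    simp [ENNReal.ofReal_eq_zero, not_le, hp]
  have hPt : ENNReal.ofReal p ≠ ⊤ := ENNReal.ofReal_ne_top
  have hpqr : (1 : ℝ≥0∞) / 1 = 1 / (ENNReal.ofReal p / ENNReal.ofReal r)
      + 1 / (ENNReal.ofReal p / ENNReal.ofReal s) := by
    rw [one_div (ENNReal.ofReal p / ENNReal.ofReal r),
      one_div (ENNReal.ofReal p / ENNReal.ofReal s),
      ENNReal.inv_div (Or.inr hPt) (Or.inr hP0),
      ENNReal.inv_div (Or.inr hPt) (Or.inr hP0),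
      ENNReal.div_add_div_same, ← ENNReal.ofReal_add hr hs, hrs,
      ENNReal.div_self hP0 hPt]
    simp
  haveI : ENNReal.HolderTriple (ENNReal.ofReal p / ENNReal.ofReal r)
      (ENNReal.ofReal p / ENNReal.ofReal s) 1 := ⟨by simpa only [one_div] using hpqr.symm⟩
  have := MemLp.smul (φ := fun ω => |f ω| ^ r) (f := fun ω => |g ω| ^ s) (r := 1) h2 h1
  exact this



lemma hasDerivAt_comp_affine {f : ℝ → ℝ} {d : ℝ → ℝ}
    (hf : ∀ z, HasDerivAt f (d z) z) (a b t : ℝ) :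
    HasDerivAt (fun s : ℝ => f (a + s * b)) (d (a + t * b) * b) t := by
  have h1 : HasDerivAt (fun s : ℝ => a + s * b) b t := by
    simpa using (hasDerivAt_mul_const b).const_add a
  have h2 : HasDerivAt (f ∘ fun s : ℝ => a + s * b) (d (a + t * b) * b) t :=
    (hf (a + t * b)).comp t h1
  exact h2



section Deriv

variable {Ω : Type*} [MeasurableSpace Ω] {μ : Measure Ω}

lemma cont_abs_rpow {r : ℝ} (hr : 0 ≤ r) : Continuous (fun z : ℝ => |z| ^ r) :=
  continuous_abs.rpow_const (fun x => Or.inr hr)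

lemma memLp_Z {p : ℝ} {X Y : Ω → ℝ}
    (hX : MemLp X (ENNReal.ofReal p) μ) (hY : MemLp Y (ENNReal.ofReal p) μ) (t : ℝ) :
    MemLp (fun ω => X ω + t * Y ω) (ENNReal.ofReal p) μ :=
  hX.add (hY.const_mul t)

lemma memLp_absXcY {p : ℝ} {X Y : Ω → ℝ}
    (hX : MemLp X (ENNReal.ofReal p) μ) (hY : MemLp Y (ENNReal.ofReal p) μ) (c : ℝ) :
    MemLp (fun ω => |X ω| + c * |Y ω|) (ENNReal.ofReal p) μ := by
  have h1 : MemLp (fun ω => |X ω|) (ENNReal.ofReal p) μ := by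
    simpa [Real.norm_eq_abs] using hX.norm
  have h2 : MemLp (fun ω => |Y ω|) (ENNReal.ofReal p) μ := by
    simpa [Real.norm_eq_abs] using hY.norm
  exact h1.add (h2.const_mul c)

lemma integrable_bound1 {p : ℝ} (hp : 2 ≤ p) {X Y : Ω → ℝ}
    (hX : MemLp X (ENNReal.ofReal p) μ) (hY : MemLp Y (ENNReal.ofReal p) μ) {c : ℝ}
    (hc : 0 ≤ c) :
    Integrable (fun ω => (|X ω| + c * |Y ω|) ^ (p - 1) * |Y ω| ^ (1 : ℝ)) μ := by
  refine (integrable_abs_rpow_mul (r := p - 1) (s := 1) (by linarith : (0:ℝ) < p)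
    (memLp_absXcY hX hY c) hY (by linarith) zero_le_one (by ring)).congr ?_
  filter_upwards with ω
  rw [abs_of_nonneg (by positivity : (0:ℝ) ≤ |X ω| + c * |Y ω|)]

lemma integrable_bound2 {p : ℝ} (hp : 2 ≤ p) {X Y : Ω → ℝ}
    (hX : MemLp X (ENNReal.ofReal p) μ) (hY : MemLp Y (ENNReal.ofReal p) μ) {c : ℝ}
    (hc : 0 ≤ c) :
    Integrable (fun ω => (|X ω| + c * |Y ω|) ^ (p - 2) * |Y ω| ^ (2 : ℝ)) μ := by
  refine (integrable_abs_rpow_mul (r := p - 2) (s := 2) (by linarith : (0:ℝ) < p)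
    (memLp_absXcY hX hY c) hY (by linarith) (by norm_num) (by ring)).congr ?_
  filter_upwards with ω
  rw [abs_of_nonneg (by positivity : (0:ℝ) ≤ |X ω| + c * |Y ω|)]

lemma absZ_le {X Y : Ω → ℝ} {t t₀ : ℝ} (ht : t ∈ ball t₀ 1) (ω : Ω) :
    |X ω + t * Y ω| ≤ |X ω| + (|t₀| + 1) * |Y ω| := by
  have h1 : |X ω + t * Y ω| ≤ |X ω| + |t| * |Y ω| := by
    calc |X ω + t * Y ω| ≤ |X ω| + |t * Y ω| := abs_add_le _ _
      _ = |X ω| + |t| * |Y ω| := by rw [abs_mul]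
  have h2 : |t| ≤ |t₀| + 1 := by
    have h3 : |t - t₀| < 1 := by
      simpa [Real.norm_eq_abs] using mem_ball_iff_norm.1 ht
    calc |t| = |t - t₀ + t₀| := by ring_nf
      _ ≤ |t - t₀| + |t₀| := abs_add_le _ _
      _ ≤ 1 + |t₀| := by linarith
      _ = |t₀| + 1 := by ring
  nlinarith [abs_nonneg (Y ω)]

lemma integrable_psi_mul {p : ℝ} (hp : 2 ≤ p) {W Y : Ω → ℝ}
    (hW : MemLp W (ENNReal.ofReal p) μ) (hY : MemLp Y (ENNReal.ofReal p) μ) :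
    Integrable (fun ω => |W ω| ^ (p - 2) * W ω * Y ω) μ := by
  have hbase : Integrable (fun ω => |W ω| ^ (p - 1) * |Y ω| ^ (1 : ℝ)) μ := by
    have h1 : MemLp (fun ω => |W ω|) (ENNReal.ofReal p) μ := by
      simpa [Real.norm_eq_abs] using hW.norm
    have := integrable_abs_rpow_mul (by linarith : (0:ℝ) < p) h1 hY
      (by linarith : (0:ℝ) ≤ p - 1) zero_le_one (by ring)
    simpa [abs_abs] using this
  have hcont : Continuous (fun z : ℝ => |z| ^ (p - 2) * z) :=
    (cont_abs_rpow (by linarith)).mul continuous_id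
  refine Integrable.mono' hbase ((hcont.comp_aestronglyMeasurable hW.1).mul hY.1) ?_
  filter_upwards with ω
  rw [Real.norm_eq_abs, abs_mul, abs_psi hp, Real.rpow_one]

lemma hasDerivAt_u {p : ℝ} (hp : 2 ≤ p) {X Y : Ω → ℝ}
    (hX : MemLp X (ENNReal.ofReal p) μ) (hY : MemLp Y (ENNReal.ofReal p) μ) (t₀ : ℝ) :
    HasDerivAt (fun t => ∫ ω, |X ω + t * Y ω| ^ p ∂μ)
      (p * ∫ ω, |X ω + t₀ * Y ω| ^ (p - 2) * (X ω + t₀ * Y ω) * Y ω ∂μ) t₀ := by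
  have hp0 : (0:ℝ) < p := by linarith
  set c : ℝ := |t₀| + 1 with hc
  have key := hasDerivAt_integral_of_dominated_loc_of_deriv_le (μ := μ)
    (F := fun t ω => |X ω + t * Y ω| ^ p)
    (F' := fun t ω => p * (|X ω + t * Y ω| ^ (p - 2) * (X ω + t * Y ω) * Y ω))
    (x₀ := t₀) (s := ball t₀ 1)
    (bound := fun ω => p * ((|X ω| + c * |Y ω|) ^ (p - 1) * |Y ω| ^ (1 : ℝ)))
    (ball_mem_nhds t₀ one_pos)
    (Filter.Eventually.of_forall fun t =>
      (cont_abs_rpow hp0.le).comp_aestronglyMeasurable (memLp_Z hX hY t).1)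
    (by
      have := (memLp_Z hX hY t₀).integrable_norm_rpow
        (by simp [ENNReal.ofReal_eq_zero, not_le, hp0]) ENNReal.ofReal_ne_top
      simpa [Real.norm_eq_abs, ENNReal.toReal_ofReal hp0.le] using this)
    ((integrable_psi_mul hp (memLp_Z hX hY t₀) hY).aestronglyMeasurable.const_mul p)
    (by
      filter_upwards with ω t ht
      rw [Real.norm_eq_abs, abs_mul, abs_mul, abs_psi hp, abs_of_nonneg hp0.le,
        Real.rpow_one]
      refine mul_le_mul_of_nonneg_left ?_ hp0.le
      exact mul_le_mul_of_nonneg_right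
        (Real.rpow_le_rpow (abs_nonneg _) (absZ_le ht ω) (by linarith)) (abs_nonneg _))
    ((integrable_bound1 hp hX hY (by positivity : (0:ℝ) ≤ |t₀| + 1)).const_mul p)
    (by
      filter_upwards with ω t ht
      have := hasDerivAt_comp_affine (f := fun z : ℝ => |z| ^ p)
        (d := fun z : ℝ => p * |z| ^ (p - 2) * z) (fun z => abs_rpow_hasDeriv hp z)
        (X ω) (Y ω) t
      exact this.congr_deriv (by beta_reduce; ring))
  have h2 := key.2
  rwa [integral_const_mul] at h2

lemma hasDerivAt_v {p : ℝ} (hp : 2 ≤ p) {X Y : Ω → ℝ}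
    (hX : MemLp X (ENNReal.ofReal p) μ) (hY : MemLp Y (ENNReal.ofReal p) μ) (t₀ : ℝ) :
    HasDerivAt (fun t => ∫ ω, |X ω + t * Y ω| ^ (p - 2) * (X ω + t * Y ω) * Y ω ∂μ)
      ((p - 1) * ∫ ω, |X ω + t₀ * Y ω| ^ (p - 2) * (Y ω) ^ 2 ∂μ) t₀ := by
  have hp0 : (0:ℝ) < p := by linarith
  set c : ℝ := |t₀| + 1 with hc
  have hc0 : (0:ℝ) ≤ c := by rw [hc]; positivity
  have hF_meas : ∀ᶠ t in nhds t₀, AEStronglyMeasurable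
      (fun ω => |X ω + t * Y ω| ^ (p - 2) * (X ω + t * Y ω) * Y ω) μ :=
    Filter.Eventually.of_forall fun t =>
      (((cont_abs_rpow (by linarith : (0:ℝ) ≤ p - 2)).mul
        continuous_id).comp_aestronglyMeasurable (memLp_Z hX hY t).1).mul hY.1
  have hF_int : Integrable (fun ω => |X ω + t₀ * Y ω| ^ (p - 2) * (X ω + t₀ * Y ω) * Y ω) μ :=
    integrable_psi_mul hp (memLp_Z hX hY t₀) hY
  have hF'_meas : AEStronglyMeasurable
      (fun ω => (p - 1) * (|X ω + t₀ * Y ω| ^ (p - 2) * (Y ω) ^ 2)) μ := by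
    refine AEStronglyMeasurable.const_mul ?_ (p - 1)
    exact ((cont_abs_rpow (by linarith : (0:ℝ) ≤ p - 2)).comp_aestronglyMeasurable
      (memLp_Z hX hY t₀).1).mul ((continuous_pow 2).comp_aestronglyMeasurable hY.1)
  have h_bound : ∀ᵐ ω ∂μ, ∀ t ∈ ball t₀ 1,
      ‖(p - 1) * (|X ω + t * Y ω| ^ (p - 2) * (Y ω) ^ 2)‖
        ≤ (p - 1) * ((|X ω| + c * |Y ω|) ^ (p - 2) * |Y ω| ^ (2 : ℝ)) := by
    filter_upwards with ω t ht
    rw [Real.norm_eq_abs, abs_mul, abs_mul, abs_of_nonneg (by linarith : (0:ℝ) ≤ p - 1),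
      abs_of_nonneg (Real.rpow_nonneg (abs_nonneg _) _),
      abs_of_nonneg (sq_nonneg (Y ω))]
    refine mul_le_mul_of_nonneg_left ?_ (by linarith : (0:ℝ) ≤ p - 1)
    have hY2 : (Y ω) ^ 2 = |Y ω| ^ (2:ℝ) := by
      rw [← sq_abs, ← Real.rpow_natCast |Y ω| 2]
      norm_num
    rw [hY2]
    exact mul_le_mul_of_nonneg_right
      (Real.rpow_le_rpow (abs_nonneg _) (absZ_le ht ω) (by linarith))
      (Real.rpow_nonneg (abs_nonneg _) _)
  have hbi : Integrable (fun ω => (p - 1) * ((|X ω| + c * |Y ω|) ^ (p - 2) * |Y ω| ^ (2:ℝ))) μ :=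
    (integrable_bound2 hp hX hY hc0).const_mul (p - 1)
  have h_diff : ∀ᵐ ω ∂μ, ∀ t ∈ ball t₀ 1,
      HasDerivAt (fun t => |X ω + t * Y ω| ^ (p - 2) * (X ω + t * Y ω) * Y ω)
        ((p - 1) * (|X ω + t * Y ω| ^ (p - 2) * (Y ω) ^ 2)) t := by
    filter_upwards with ω t ht
    have h := (hasDerivAt_comp_affine (f := fun z : ℝ => |z| ^ (p - 2) * z)
      (d := fun z : ℝ => (p - 1) * |z| ^ (p - 2)) (fun z => psi_hasDeriv hp z)
      (X ω) (Y ω) t).mul_const (Y ω)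
    exact h.congr_deriv (by beta_reduce; ring)
  have key := hasDerivAt_integral_of_dominated_loc_of_deriv_le (μ := μ)
    (F := fun t ω => |X ω + t * Y ω| ^ (p - 2) * (X ω + t * Y ω) * Y ω)
    (F' := fun t ω => (p - 1) * (|X ω + t * Y ω| ^ (p - 2) * (Y ω) ^ 2))
    (x₀ := t₀) (s := ball t₀ 1)
    (bound := fun ω => (p - 1) * ((|X ω| + c * |Y ω|) ^ (p - 2) * |Y ω| ^ (2 : ℝ)))
    (ball_mem_nhds t₀ one_pos) hF_meas hF_int hF'_meas h_bound hbi h_diff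
  have h2 := key.2
  rwa [integral_const_mul] at h2

lemma integral_abs_rpow_nonneg {p : ℝ} (f : Ω → ℝ) :
    0 ≤ ∫ ω, |f ω| ^ p ∂μ :=
  integral_nonneg fun ω => Real.rpow_nonneg (abs_nonneg _) _

lemma ae_zero_of_integral_rpow {p : ℝ} (hp0 : 0 < p) {f : Ω → ℝ}
    (hf : MemLp f (ENNReal.ofReal p) μ) (h0 : ∫ ω, |f ω| ^ p ∂μ = 0) :
    f =ᵐ[μ] 0 := by
  have hint : Integrable (fun ω => |f ω| ^ p) μ := by
    have := hf.integrable_norm_rpow (by simp [ENNReal.ofReal_eq_zero, not_le, hp0])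
      ENNReal.ofReal_ne_top
    simpa [Real.norm_eq_abs, ENNReal.toReal_ofReal hp0.le] using this
  have hae := (integral_eq_zero_iff_of_nonneg
    (fun ω => Real.rpow_nonneg (abs_nonneg _) _) hint).mp h0
  filter_upwards [hae] with ω hω
  simp only [Pi.zero_apply] at hω ⊢
  by_contra hne
  have hpos : (0:ℝ) < |f ω| ^ p := Real.rpow_pos_of_pos (abs_pos.2 hne) p
  rw [hω] at hpos
  exact lt_irrefl 0 hpos

lemma holder_w {p : ℝ} (hp : 2 ≤ p) {W Y : Ω → ℝ}
    (hW : MemLp W (ENNReal.ofReal p) μ) (hY : MemLp Y (ENNReal.ofReal p) μ) :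
    ∫ ω, |W ω| ^ (p - 2) * (Y ω) ^ 2 ∂μ
      ≤ (∫ ω, |W ω| ^ p ∂μ) ^ ((p - 2) / p) * (∫ ω, |Y ω| ^ p ∂μ) ^ (2 / p) := by
  rcases eq_or_lt_of_le hp with hp2 | hp2
  · -- p = 2
    subst hp2
    have hL : (fun ω => |W ω| ^ (2 - 2 : ℝ) * (Y ω) ^ 2) = fun ω => |Y ω| ^ (2:ℝ) := by
      funext ω
      rw [show (2 - 2 : ℝ) = 0 by norm_num, Real.rpow_zero, one_mul, ← sq_abs,
        ← Real.rpow_natCast |Y ω| 2]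
      norm_num
    rw [hL, show ((2:ℝ) - 2) / 2 = 0 by norm_num, Real.rpow_zero, one_mul,
      show (2:ℝ) / 2 = 1 by norm_num, Real.rpow_one]
  · -- p > 2
    have hpm2 : (0:ℝ) < p - 2 := by linarith
    have hp0 : (0:ℝ) < p := by linarith
    have hpq : Real.HolderConjugate (p / (p - 2)) (p / 2) := by
      rw [Real.holderConjugate_iff]
      constructor
      · rw [lt_div_iff₀ hpm2]; linarith
      · rw [inv_div, inv_div, ← add_div]
        field_simp
        ring
    have hf : MemLp (fun ω => |W ω| ^ (p - 2)) (ENNReal.ofReal (p / (p - 2))) μ := by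
      have := memLp_abs_rpow (le_of_lt hpm2) hW
      rwa [← ENNReal.ofReal_div_of_pos hpm2] at this
    have hg : MemLp (fun ω => (Y ω) ^ 2) (ENNReal.ofReal (p / 2)) μ := by
      have h1 := memLp_abs_rpow (by norm_num : (0:ℝ) ≤ 2) hY
      rw [← ENNReal.ofReal_div_of_pos (by norm_num : (0:ℝ) < 2)] at h1
      refine MemLp.ae_eq ?_ h1
      filter_upwards with ω
      rw [← sq_abs, ← Real.rpow_natCast |Y ω| 2]
      norm_num
    have key := integral_mul_le_Lp_mul_Lq_of_nonneg hpq
      (Filter.Eventually.of_forall fun ω => Real.rpow_nonneg (abs_nonneg _) _)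
      (Filter.Eventually.of_forall fun ω => sq_nonneg _) hf hg
    have e1 : (∫ ω, ((fun ω => |W ω| ^ (p - 2)) ω) ^ (p / (p - 2)) ∂μ) = ∫ ω, |W ω| ^ p ∂μ := by
      refine integral_congr_ae (Filter.Eventually.of_forall fun ω => ?_)
      show (|W ω| ^ (p - 2)) ^ (p / (p - 2)) = |W ω| ^ p
      rw [← Real.rpow_mul (abs_nonneg _)]
      congr 1
      field_simp
    have e2 : (∫ ω, ((fun ω => (Y ω) ^ 2) ω) ^ (p / 2) ∂μ) = ∫ ω, |Y ω| ^ p ∂μ := by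
      refine integral_congr_ae (Filter.Eventually.of_forall fun ω => ?_)
      show ((Y ω) ^ 2) ^ (p / 2) = |Y ω| ^ p
      exact sq_rpow_half p (Y ω)
    rw [e1, e2, one_div_div, one_div_div] at key
    exact key

theorem rio_step {p : ℝ} (hp : 2 ≤ p) {X Y : Ω → ℝ}
    (hX : MemLp X (ENNReal.ofReal p) μ) (hY : MemLp Y (ENNReal.ofReal p) μ)
    (horth : ∫ ω, |X ω| ^ (p - 2) * X ω * Y ω ∂μ = 0) :
    (∫ ω, |X ω + Y ω| ^ p ∂μ) ^ (2 / p)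
      ≤ (∫ ω, |X ω| ^ p ∂μ) ^ (2 / p) + (p - 1) * (∫ ω, |Y ω| ^ p ∂μ) ^ (2 / p) := by
  have hp0 : (0:ℝ) < p := by linarith
  have h2p : (2:ℝ) / p ≠ 0 := by positivity
  rcases eq_or_lt_of_le (integral_abs_rpow_nonneg (μ := μ) (p := p) Y) with hY0 | hY0
  · -- ∫ |Y|^p = 0
    have hYae := ae_zero_of_integral_rpow hp0 hY hY0.symm
    have he : ∫ ω, |X ω + Y ω| ^ p ∂μ = ∫ ω, |X ω| ^ p ∂μ := by
      refine integral_congr_ae ?_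
      filter_upwards [hYae] with ω hω
      simp [Pi.zero_apply] at hω
      rw [hω, add_zero]
    rw [he, ← hY0, Real.zero_rpow h2p, mul_zero, add_zero]
  rcases eq_or_lt_of_le (integral_abs_rpow_nonneg (μ := μ) (p := p) X) with hX0 | hX0
  · -- ∫ |X|^p = 0
    have hXae := ae_zero_of_integral_rpow hp0 hX hX0.symm
    have he : ∫ ω, |X ω + Y ω| ^ p ∂μ = ∫ ω, |Y ω| ^ p ∂μ := by
      refine integral_congr_ae ?_
      filter_upwards [hXae] with ω hω
      simp [Pi.zero_apply] at hω
      rw [hω, zero_add]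
    rw [he, ← hX0, Real.zero_rpow h2p, zero_add]
    exact le_mul_of_one_le_left (Real.rpow_nonneg (integral_abs_rpow_nonneg Y) _)
      (by linarith)
  -- main case
  set u : ℝ → ℝ := fun t => ∫ ω, |X ω + t * Y ω| ^ p ∂μ with hu
  set v : ℝ → ℝ := fun t => ∫ ω, |X ω + t * Y ω| ^ (p - 2) * (X ω + t * Y ω) * Y ω ∂μ with hv
  set w : ℝ → ℝ := fun t => ∫ ω, |X ω + t * Y ω| ^ (p - 2) * (Y ω) ^ 2 ∂μ with hw
  have hud : ∀ t, HasDerivAt u (p * v t) t := fun t => hasDerivAt_u hp hX hY t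
  have hvd : ∀ t, HasDerivAt v ((p - 1) * w t) t := fun t => hasDerivAt_v hp hX hY t
  set cY : ℝ := (∫ ω, |Y ω| ^ p ∂μ) ^ (2 / p) with hcY
  have hcY0 : 0 < cY := Real.rpow_pos_of_pos hY0 _
  set K : ℝ := (p - 1) * cY with hK
  have hK0 : 0 ≤ K := mul_nonneg (by linarith) hcY0.le
  have hw_le : ∀ t, w t ≤ (u t) ^ ((p - 2) / p) * cY := fun t =>
    holder_w hp (memLp_Z hX hY t) hY
  have hw_nonneg : ∀ t, 0 ≤ w t := fun t =>
    integral_nonneg fun ω => mul_nonneg (Real.rpow_nonneg (abs_nonneg _) _) (sq_nonneg _)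
  have hu_nonneg : ∀ t, 0 ≤ u t := fun t => integral_abs_rpow_nonneg _
  have hv0 : v 0 = 0 := by
    rw [hv]
    simpa using horth
  have hu_pos : ∀ t ∈ Set.Icc (0:ℝ) 1, 0 < u t := by
    intro t ht
    rcases (hu_nonneg t).eq_or_lt with h0 | h0
    swap
    · exact h0
    exfalso
    have hae := ae_zero_of_integral_rpow hp0 (memLp_Z hX hY t) h0.symm
    rcases eq_or_lt_of_le ht.1 with ht0 | ht0
    · -- t = 0 : X = 0 a.e., contradiction with hX0
      have hXae : X =ᵐ[μ] 0 := by
        filter_upwards [hae] with ω hω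
        simpa [← ht0] using hω
      have : ∫ ω, |X ω| ^ p ∂μ = 0 := by
        rw [integral_eq_zero_iff_of_nonneg (fun ω => Real.rpow_nonneg (abs_nonneg _) _)]
        · filter_upwards [hXae] with ω hω
          simp [Pi.zero_apply] at hω ⊢
          rw [hω]
          simp [Real.zero_rpow (show p ≠ 0 by linarith)]
        · have := hX.integrable_norm_rpow (by simp [ENNReal.ofReal_eq_zero, not_le, hp0])
            ENNReal.ofReal_ne_top
          simpa [Real.norm_eq_abs, ENNReal.toReal_ofReal hp0.le] using this
      linarith
    · -- t > 0 : contradiction with horth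
      have hptwise : ∀ᵐ ω ∂μ, |X ω| ^ (p - 2) * X ω * Y ω = -(t ^ (p - 1)) * |Y ω| ^ p := by
        filter_upwards [hae] with ω hω
        have hXω : X ω = -(t * Y ω) := by
          have : X ω + t * Y ω = 0 := hω
          linarith
        rw [hXω, abs_neg, abs_mul, abs_of_pos ht0,
          Real.mul_rpow ht0.le (abs_nonneg _)]
        have ht1 : t ^ (p - 2) * t = t ^ (p - 1) := by
          rw [← Real.rpow_add_one (ne_of_gt ht0)]
          congr 1; ring
        calc t ^ (p - 2) * |Y ω| ^ (p - 2) * -(t * Y ω) * Y ω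
            = -((t ^ (p - 2) * t) * (|Y ω| ^ (p - 2) * (Y ω) ^ 2)) := by ring
          _ = -(t ^ (p - 1)) * |Y ω| ^ p := by rw [ht1, abs_rpow_mul_sq hp]; ring
      have hcomp : ∫ ω, |X ω| ^ (p - 2) * X ω * Y ω ∂μ
          = -(t ^ (p - 1)) * ∫ ω, |Y ω| ^ p ∂μ := by
        rw [integral_congr_ae hptwise, integral_const_mul]
      rw [horth] at hcomp
      have htp : (0:ℝ) < t ^ (p - 1) := Real.rpow_pos_of_pos ht0 _
      nlinarith
  -- η t = u t ^ (2/p - 1) * v t  satisfies η t ≤ K * t on [0,1]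
  set η : ℝ → ℝ := fun t => u t ^ (2 / p - 1) * v t with hη
  have hηd : ∀ t ∈ Set.Icc (0:ℝ) 1, HasDerivAt η
      ((p * v t) * (2 / p - 1) * u t ^ (2 / p - 1 - 1) * v t
        + u t ^ (2 / p - 1) * ((p - 1) * w t)) t := by
    intro t ht
    exact ((hud t).rpow_const (Or.inl (ne_of_gt (hu_pos t ht)))).mul (hvd t)
  have hηd_le : ∀ t ∈ Set.Icc (0:ℝ) 1,
      (p * v t) * (2 / p - 1) * u t ^ (2 / p - 1 - 1) * v t
        + u t ^ (2 / p - 1) * ((p - 1) * w t) ≤ K := by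
    intro t ht
    have hut := hu_pos t ht
    have hterm1 : (p * v t) * (2 / p - 1) * u t ^ (2 / p - 1 - 1) * v t ≤ 0 := by
      have h1 : (p * v t) * (2 / p - 1) * u t ^ (2 / p - 1 - 1) * v t
          = (2 / p - 1) * (p * (u t ^ (2 / p - 1 - 1) * (v t * v t))) := by ring
      rw [h1]
      apply mul_nonpos_of_nonpos_of_nonneg
      · have : 2 / p ≤ 1 := by
          rw [div_le_one hp0]; linarith
        linarith
      · exact mul_nonneg hp0.le
          (mul_nonneg (Real.rpow_nonneg (hu_nonneg t) _) (mul_self_nonneg _))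
    have hterm2 : u t ^ (2 / p - 1) * ((p - 1) * w t) ≤ K := by
      have h2 : u t ^ (2 / p - 1) * ((p - 1) * w t)
          ≤ u t ^ (2 / p - 1) * ((p - 1) * (u t ^ ((p - 2) / p) * cY)) := by
        apply mul_le_mul_of_nonneg_left _ (Real.rpow_nonneg (hu_nonneg t) _)
        exact mul_le_mul_of_nonneg_left (hw_le t) (by linarith)
      have h3 : u t ^ (2 / p - 1) * ((p - 1) * (u t ^ ((p - 2) / p) * cY))
          = (p - 1) * cY * (u t ^ (2 / p - 1) * u t ^ ((p - 2) / p)) := by ring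
      have h4 : u t ^ (2 / p - 1) * u t ^ ((p - 2) / p) = 1 := by
        rw [← Real.rpow_add hut]
        have : 2 / p - 1 + (p - 2) / p = 0 := by field_simp; ring
        rw [this, Real.rpow_zero]
      calc u t ^ (2 / p - 1) * ((p - 1) * w t)
          ≤ u t ^ (2 / p - 1) * ((p - 1) * (u t ^ ((p - 2) / p) * cY)) := h2
        _ = (p - 1) * cY * (u t ^ (2 / p - 1) * u t ^ ((p - 2) / p)) := h3
        _ = K := by rw [h4, hK, mul_one]
    linarith
  have hη_le : ∀ t ∈ Set.Icc (0:ℝ) 1, η t ≤ K * t := by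
    have hg : MonotoneOn (fun t => K * t - η t) (Set.Icc (0:ℝ) 1) := by
      have hgd : ∀ t ∈ Set.Icc (0:ℝ) 1, HasDerivAt (fun t => K * t - η t)
          (K - ((p * v t) * (2 / p - 1) * u t ^ (2 / p - 1 - 1) * v t
            + u t ^ (2 / p - 1) * ((p - 1) * w t))) t := by
        intro t ht
        exact (((hasDerivAt_id t).const_mul K).sub (hηd t ht)).congr_deriv (by ring)
      refine monotoneOn_of_deriv_nonneg (convex_Icc 0 1) ?_ ?_ ?_
      · exact continuousOn_of_forall_continuousAt fun t ht => (hgd t ht).continuousAt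
      · intro t ht
        rw [interior_Icc] at ht
        exact (hgd t (Set.mem_Icc_of_Ioo ht)).differentiableAt.differentiableWithinAt
      · intro t ht
        rw [interior_Icc] at ht
        rw [(hgd t (Set.mem_Icc_of_Ioo ht)).deriv]
        have := hηd_le t (Set.mem_Icc_of_Ioo ht)
        linarith
    intro t ht
    have h01 : (0:ℝ) ∈ Set.Icc (0:ℝ) 1 := by constructor <;> norm_num
    have := hg h01 ht ht.1
    have hη0 : η 0 = 0 := by
      rw [hη]
      simp only
      rw [hv0, mul_zero]
    simp only at this
    rw [hη0] at this
    linarith [this]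
  -- ψ t = u t ^ (2/p) satisfies ψ 1 ≤ ψ 0 + K
  set ψ : ℝ → ℝ := fun t => u t ^ (2 / p) with hψ
  have hψd : ∀ t ∈ Set.Icc (0:ℝ) 1, HasDerivAt ψ
      ((p * v t) * (2 / p) * u t ^ (2 / p - 1)) t := by
    intro t ht
    exact (hud t).rpow_const (Or.inl (ne_of_gt (hu_pos t ht)))
  have hψ_ineq : ψ 1 ≤ ψ 0 + K := by
    have hG : MonotoneOn (fun t => (ψ 0 + K * t ^ 2) - ψ t) (Set.Icc (0:ℝ) 1) := by
      have hGd : ∀ t ∈ Set.Icc (0:ℝ) 1, HasDerivAt (fun t => (ψ 0 + K * t ^ 2) - ψ t)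
          ((K * (2 * t)) - ((p * v t) * (2 / p) * u t ^ (2 / p - 1))) t := by
        intro t ht
        have h1 : HasDerivAt (fun t : ℝ => ψ 0 + K * t ^ 2) (K * (2 * t)) t := by
          have := ((hasDerivAt_pow 2 t).const_mul K).const_add (ψ 0)
          simpa using this
        exact h1.sub (hψd t ht)
      refine monotoneOn_of_deriv_nonneg (convex_Icc 0 1) ?_ ?_ ?_
      · exact continuousOn_of_forall_continuousAt fun t ht => (hGd t ht).continuousAt
      · intro t ht
        rw [interior_Icc] at ht
        exact (hGd t (Set.mem_Icc_of_Ioo ht)).differentiableAt.differentiableWithinAt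
      · intro t ht
        rw [interior_Icc] at ht
        rw [(hGd t (Set.mem_Icc_of_Ioo ht)).deriv]
        have hde : (p * v t) * (2 / p) * u t ^ (2 / p - 1) = 2 * η t := by
          rw [hη]
          simp only
          field_simp
        rw [hde]
        have := hη_le t (Set.mem_Icc_of_Ioo ht)
        have ht0 : 0 ≤ t := le_of_lt ht.1
        nlinarith
    have h01 : (0:ℝ) ∈ Set.Icc (0:ℝ) 1 := by constructor <;> norm_num
    have h11 : (1:ℝ) ∈ Set.Icc (0:ℝ) 1 := by constructor <;> norm_num
    have := hG h01 h11 (by norm_num)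
    simp only at this
    nlinarith [this]
  -- conclude
  have hu1 : u 1 = ∫ ω, |X ω + Y ω| ^ p ∂μ := by
    rw [hu]; simp only [one_mul]
  have hu0 : u 0 = ∫ ω, |X ω| ^ p ∂μ := by
    rw [hu]; simp only [zero_mul, add_zero]
  rw [hψ] at hψ_ineq
  simp only at hψ_ineq
  rw [hu1, hu0] at hψ_ineq
  rw [hK, hcY] at hψ_ineq
  exact hψ_ineq

lemma lyapunov {p : ℝ} (hp0 : 0 < p) {f : Ω → ℝ} [IsProbabilityMeasure μ]
    (hf : MemLp f (ENNReal.ofReal (2 * p)) μ) :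
    (∫ ω, |f ω| ^ p ∂μ) ^ (2 / p) ≤ (∫ ω, |f ω| ^ (2 * p) ∂μ) ^ (1 / p) := by
  have hA2 : 0 ≤ ∫ ω, |f ω| ^ (2 * p) ∂μ := integral_abs_rpow_nonneg _
  have h1 : ∫ ω, |f ω| ^ p ∂μ ≤ (∫ ω, |f ω| ^ (2 * p) ∂μ) ^ ((1:ℝ) / 2) := by
    have hpq : Real.HolderConjugate 2 2 := Real.holderConjugate_iff.mpr ⟨one_lt_two, by norm_num⟩
    have hfmem : MemLp (fun ω => |f ω| ^ p) (ENNReal.ofReal 2) μ := by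
      have h := memLp_abs_rpow hp0.le hf
      have he : ENNReal.ofReal (2 * p) / ENNReal.ofReal p = ENNReal.ofReal 2 := by
        rw [← ENNReal.ofReal_div_of_pos hp0]
        congr 1
        field_simp
      rwa [he] at h
    have hgmem : MemLp (fun _ : Ω => (1:ℝ)) (ENNReal.ofReal 2) μ := memLp_const 1
    have key := integral_mul_le_Lp_mul_Lq_of_nonneg hpq
      (Filter.Eventually.of_forall fun ω => Real.rpow_nonneg (abs_nonneg _) _)
      (Filter.Eventually.of_forall fun _ => zero_le_one) hfmem hgmem
    simp only [mul_one] at key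
    have e1 : ∫ ω, ((fun ω => |f ω| ^ p) ω) ^ (2:ℝ) ∂μ = ∫ ω, |f ω| ^ (2 * p) ∂μ := by
      refine integral_congr_ae (Filter.Eventually.of_forall fun ω => ?_)
      show (|f ω| ^ p) ^ (2:ℝ) = _
      rw [← Real.rpow_mul (abs_nonneg _)]
      congr 1; ring
    have e2 : (∫ (_ : Ω), ((1:ℝ)) ^ (2:ℝ) ∂μ) = 1 := by
      simp
    rw [e1, e2] at key
    simpa using key
  calc (∫ ω, |f ω| ^ p ∂μ) ^ (2 / p)
      ≤ ((∫ ω, |f ω| ^ (2 * p) ∂μ) ^ ((1:ℝ)/2)) ^ (2 / p) :=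
        Real.rpow_le_rpow (integral_abs_rpow_nonneg _) h1 (by positivity)
    _ = (∫ ω, |f ω| ^ (2 * p) ∂μ) ^ (1 / p) := by
        rw [← Real.rpow_mul hA2]
        congr 1
        field_simp

end Deriv
end RioAux

open RioAux

/-- With the `p`-quadratic variation
`[f]_{n,p} = (∑_{i=1}^n |ξ i ^ 2|_p)^{1/2}`, one has `|S n|_p ≤ (p-1) · [f]_{n,p}`
for `p ≥ 2`. -/
theorem martingale_p_quadratic_variation_bound
    {Ω : Type*} {m0 : MeasurableSpace Ω} (μ : Measure Ω) [IsProbabilityMeasure μ]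
    (ℱ : ℕ → MeasurableSpace Ω) (hℱmono : Monotone ℱ) (hℱle : ∀ i, ℱ i ≤ m0)
    (ξ : ℕ → Ω → ℝ)
    (hadapted : ∀ i, StronglyMeasurable[ℱ i] (ξ i))
    (hmds : ∀ i, 1 ≤ i → μ[ξ i | ℱ (i - 1)] =ᵐ[μ] 0)
    (p : ℝ) (hp : 2 ≤ p)
    (hLp : ∀ i, MemLp (ξ i) (ENNReal.ofReal (2 * p)) μ)
    (n : ℕ) (hn : 1 ≤ n) :
    (∫ x, |∑ i ∈ Icc 1 n, ξ i x| ^ p ∂μ) ^ (1 / p)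
      ≤ (p - 1) *
        (∑ i ∈ Icc 1 n, (∫ x, |(ξ i x) ^ 2| ^ p ∂μ) ^ (1 / p)) ^ ((1 : ℝ) / 2) := by
  classical
  have hp0 : (0:ℝ) < p := by linarith
  have hLp' : ∀ i, MemLp (ξ i) (ENNReal.ofReal p) μ := fun i =>
    (hLp i).mono_exponent (ENNReal.ofReal_le_ofReal (by linarith))
  set S : ℕ → Ω → ℝ := fun k ω => ∑ i ∈ Icc 1 k, ξ i ω with hSdef
  have hS_mem : ∀ k, MemLp (S k) (ENNReal.ofReal p) μ := fun k =>
    memLp_finsetSum _ (fun i _ => hLp' i)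
  have hS_meas : ∀ k, StronglyMeasurable[ℱ k] (S k) := fun k =>
    Finset.stronglyMeasurable_fun_sum _ fun i hi =>
      (hadapted i).mono (hℱmono (Finset.mem_Icc.mp hi).2)
  -- orthogonality via conditional expectation
  have horth : ∀ k, 1 ≤ k →
      ∫ ω, |S k ω| ^ (p - 2) * S k ω * ξ (k+1) ω ∂μ = 0 := by
    intro k hk
    have hfmeas : StronglyMeasurable[ℱ k] (fun ω => |S k ω| ^ (p - 2) * S k ω) :=
      ((cont_abs_rpow (by linarith : (0:ℝ) ≤ p - 2)).mul
        continuous_id).comp_stronglyMeasurable (hS_meas k)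
    have hg_int : Integrable (ξ (k+1)) μ :=
      (hLp' (k+1)).integrable (by
        rw [← ENNReal.ofReal_one]
        exact ENNReal.ofReal_le_ofReal (by linarith))
    have hfg_int : Integrable ((fun ω => |S k ω| ^ (p - 2) * S k ω) * ξ (k+1)) μ :=
      integrable_psi_mul hp (hS_mem k) (hLp' (k+1))
    have hmds' := hmds (k+1) (by omega)
    rw [Nat.add_sub_cancel] at hmds'
    have hpull := condExp_mul_of_stronglyMeasurable_left hfmeas hfg_int hg_int
    have hzero : (fun ω => |S k ω| ^ (p - 2) * S k ω) * μ[ξ (k+1) | ℱ k] =ᵐ[μ] 0 := by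
      filter_upwards [hmds'] with ω hω
      simp only [Pi.mul_apply, Pi.zero_apply] at hω ⊢
      rw [hω, mul_zero]
    calc ∫ ω, |S k ω| ^ (p - 2) * S k ω * ξ (k+1) ω ∂μ
        = ∫ ω, (μ[(fun ω => |S k ω| ^ (p - 2) * S k ω) * ξ (k+1) | ℱ k]) ω ∂μ :=
          (integral_condExp (hℱle k)).symm
      _ = ∫ ω, (0 : Ω → ℝ) ω ∂μ := integral_congr_ae (hpull.trans hzero)
      _ = 0 := by simp
  -- induction
  have key : ∀ k, 1 ≤ k → (∫ ω, |S k ω| ^ p ∂μ) ^ (2 / p)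
      ≤ (p - 1) * ∑ i ∈ Icc 1 k, (∫ ω, |ξ i ω| ^ p ∂μ) ^ (2 / p) := by
    intro k hk
    induction k, hk using Nat.le_induction with
    | base =>
        have hS1 : ∀ ω, S 1 ω = ξ 1 ω := by
          intro ω
          rw [hSdef]
          simp
        have he : ∫ ω, |S 1 ω| ^ p ∂μ = ∫ ω, |ξ 1 ω| ^ p ∂μ := by
          refine integral_congr_ae (Filter.Eventually.of_forall fun ω => ?_)
          show |S 1 ω| ^ p = |ξ 1 ω| ^ p
          rw [hS1 ω]
        rw [he, Finset.Icc_self, Finset.sum_singleton]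
        exact le_mul_of_one_le_left
          (Real.rpow_nonneg (integral_abs_rpow_nonneg _) _) (by linarith)
    | succ k hk ih =>
        have hnotmem : (k+1) ∉ Icc 1 k := by simp
        have hins : Icc 1 (k+1) = insert (k+1) (Icc 1 k) := by
          ext x
          simp only [Finset.mem_Icc, Finset.mem_insert]
          omega
        have hsplit : ∀ ω, S (k+1) ω = S k ω + ξ (k+1) ω := by
          intro ω
          rw [hSdef]
          simp only
          rw [hins, Finset.sum_insert hnotmem]
          ring
        have hstep := rio_step hp (hS_mem k) (hLp' (k+1)) (horth k hk)
        have he : ∫ ω, |S (k+1) ω| ^ p ∂μ = ∫ ω, |S k ω + ξ (k+1) ω| ^ p ∂μ := by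
          refine integral_congr_ae (Filter.Eventually.of_forall fun ω => ?_)
          show |S (k+1) ω| ^ p = |S k ω + ξ (k+1) ω| ^ p
          rw [hsplit ω]
        rw [he, hins, Finset.sum_insert hnotmem]
        calc (∫ ω, |S k ω + ξ (k+1) ω| ^ p ∂μ) ^ (2 / p)
            ≤ (∫ ω, |S k ω| ^ p ∂μ) ^ (2 / p)
              + (p - 1) * (∫ ω, |ξ (k+1) ω| ^ p ∂μ) ^ (2 / p) := hstep
          _ ≤ (p - 1) * (∑ i ∈ Icc 1 k, (∫ ω, |ξ i ω| ^ p ∂μ) ^ (2 / p))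
              + (p - 1) * (∫ ω, |ξ (k+1) ω| ^ p ∂μ) ^ (2 / p) := by linarith
          _ = (p - 1) * ((∫ ω, |ξ (k+1) ω| ^ p ∂μ) ^ (2 / p)
              + ∑ i ∈ Icc 1 k, (∫ ω, |ξ i ω| ^ p ∂μ) ^ (2 / p)) := by ring
  have hkey := key n hn
  -- identify the quadratic variation terms
  have hd : ∀ i, ∫ x, |(ξ i x) ^ 2| ^ p ∂μ = ∫ x, |ξ i x| ^ (2 * p) ∂μ := by
    intro i
    refine integral_congr_ae (Filter.Eventually.of_forall fun x => ?_)
    show |ξ i x ^ 2| ^ p = |ξ i x| ^ (2 * p)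
    rw [abs_of_nonneg (sq_nonneg (ξ i x))]
    have h := sq_rpow_half (2 * p) (ξ i x)
    rwa [show (2 * p) / 2 = p by ring] at h
  have hsum_le : (∑ i ∈ Icc 1 n, (∫ ω, |ξ i ω| ^ p ∂μ) ^ (2 / p))
      ≤ ∑ i ∈ Icc 1 n, (∫ x, |(ξ i x) ^ 2| ^ p ∂μ) ^ (1 / p) := by
    refine Finset.sum_le_sum fun i _ => ?_
    rw [hd i]
    exact lyapunov hp0 (hLp i)
  have hsum_nonneg : 0 ≤ ∑ i ∈ Icc 1 n, (∫ ω, |ξ i ω| ^ p ∂μ) ^ (2 / p) :=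
    Finset.sum_nonneg fun i _ => Real.rpow_nonneg (integral_abs_rpow_nonneg _) _
  have hA : 0 ≤ ∫ ω, |S n ω| ^ p ∂μ := integral_abs_rpow_nonneg _
  have hL : (∫ x, |∑ i ∈ Icc 1 n, ξ i x| ^ p ∂μ) ^ (1 / p)
      = ((∫ ω, |S n ω| ^ p ∂μ) ^ (2 / p)) ^ ((1:ℝ) / 2) := by
    rw [← Real.rpow_mul hA]
    congr 1
    field_simp
  rw [hL]
  have hsqrt1 : ((∫ ω, |S n ω| ^ p ∂μ) ^ (2 / p)) ^ ((1:ℝ) / 2)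
      ≤ ((p - 1) * ∑ i ∈ Icc 1 n, (∫ ω, |ξ i ω| ^ p ∂μ) ^ (2 / p)) ^ ((1:ℝ) / 2) :=
    Real.rpow_le_rpow (Real.rpow_nonneg hA _) hkey (by norm_num)
  have hmulsplit : ((p - 1) * ∑ i ∈ Icc 1 n, (∫ ω, |ξ i ω| ^ p ∂μ) ^ (2 / p)) ^ ((1:ℝ) / 2)
      = (p - 1) ^ ((1:ℝ)/2) * (∑ i ∈ Icc 1 n, (∫ ω, |ξ i ω| ^ p ∂μ) ^ (2 / p)) ^ ((1:ℝ)/2) :=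
    Real.mul_rpow (by linarith) hsum_nonneg
  have hp1 : (p - 1) ^ ((1:ℝ)/2) ≤ p - 1 := by
    have h := Real.rpow_le_rpow_of_exponent_le (by linarith : (1:ℝ) ≤ p - 1)
      (by norm_num : (1:ℝ)/2 ≤ 1)
    rwa [Real.rpow_one] at h
  have hfinal : (p - 1) ^ ((1:ℝ)/2) * (∑ i ∈ Icc 1 n, (∫ ω, |ξ i ω| ^ p ∂μ) ^ (2 / p)) ^ ((1:ℝ)/2)
      ≤ (p - 1) * (∑ i ∈ Icc 1 n, (∫ x, |(ξ i x) ^ 2| ^ p ∂μ) ^ (1 / p)) ^ ((1:ℝ)/2) := by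
    apply mul_le_mul hp1
    · exact Real.rpow_le_rpow hsum_nonneg hsum_le (by norm_num)
    · exact Real.rpow_nonneg hsum_nonneg _
    · linarith
  calc ((∫ ω, |S n ω| ^ p ∂μ) ^ (2 / p)) ^ ((1:ℝ) / 2)
      ≤ ((p - 1) * ∑ i ∈ Icc 1 n, (∫ ω, |ξ i ω| ^ p ∂μ) ^ (2 / p)) ^ ((1:ℝ) / 2) := hsqrt1
    _ = (p - 1) ^ ((1:ℝ)/2) * (∑ i ∈ Icc 1 n, (∫ ω, |ξ i ω| ^ p ∂μ) ^ (2 / p)) ^ ((1:ℝ)/2) :=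
        hmulsplit
    _ ≤ (p - 1) * (∑ i ∈ Icc 1 n, (∫ x, |(ξ i x) ^ 2| ^ p ∂μ) ^ (1 / p)) ^ ((1:ℝ)/2) := hfinal
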